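/- Let H = {z ∈ ℂ : Im z > 0} be the upper half-plane, let ρ denote the hyperbolic metric on H (the metric satisfying cosh(ρ(x,y)/2) = 1 + |x−y|²/(2·Im x·Im y)), let x ∈ H and r ∈ (0,1). Then B_ρ(x, R₁) ⊆ B_{ĉ}(x, r) ⊆ B_ρ(x, R₂), where R₁ = log(1+r) and R₂ = 2·log(1 + r/(1−r)). -/

import Mathlib

open Set Metric

/-- The `ĉ` metric: `ĉ_D(x,y) = sup_{p ∈ ∂D} |x−y| / max(|x−p|, |y−p|)`. -/
noncomputable def ctilde {E : Type*} [SeminormedAddCommGroup E] (D : Set E) (x y : E) : ℝ :=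
  ⨆ p : frontier D, ‖x - y‖ / max ‖x - (p : E)‖ ‖y - (p : E)‖

/-- The upper half-plane `H = {z ∈ ℂ : Im z > 0}`. -/
def upperHalf : Set ℂ := {z : ℂ | 0 < z.im}

lemma frontier_upperHalf : frontier upperHalf = {z : ℂ | z.im = 0} := by
  have hopen : IsOpen upperHalf := isOpen_lt continuous_const Complex.continuous_im
  have hclos : closure upperHalf = {z : ℂ | 0 ≤ z.im} := by
    apply Subset.antisymm
    · exact closure_minimal (fun z hz => le_of_lt (show 0 < z.im from hz))
        (isClosed_le continuous_const Complex.continuous_im)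
    · intro z hz
      rw [Metric.mem_closure_iff]
      intro ε hε
      refine ⟨z + (ε/2 : ℝ) * Complex.I, ?_, ?_⟩
      · simp only [upperHalf, mem_setOf_eq, Complex.add_im, Complex.mul_im,
          Complex.ofReal_re, Complex.I_im, Complex.ofReal_im, Complex.I_re]
        simp only [mem_setOf_eq] at hz
        nlinarith
      · rw [dist_self_add_right]
        rw [norm_mul, Complex.norm_real, Complex.norm_I]
        rw [Real.norm_eq_abs, abs_of_pos (by linarith)]
        linarith
  rw [frontier, hclos, hopen.interior_eq]
  ext z
  simp only [mem_diff, mem_setOf_eq, upperHalf]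
  constructor
  · rintro ⟨h1, h2⟩; linarith [lt_or_ge 0 z.im |>.resolve_left h2]
  · intro h; exact ⟨le_of_eq h.symm, by simp [h]⟩

lemma im_le_norm_sub (z p : ℂ) (hp : p.im = 0) : z.im ≤ ‖z - p‖ := by
  have h1 : |(z - p).im| ≤ ‖z - p‖ := Complex.abs_im_le_norm _
  rw [Complex.sub_im, hp, sub_zero] at h1
  exact (le_abs_self _).trans h1

lemma ctilde_bdd (x y : ℂ) (hx : 0 < x.im) :
    BddAbove (Set.range fun p : frontier upperHalf =>
      ‖x - y‖ / max ‖x - (p : ℂ)‖ ‖y - (p : ℂ)‖) := by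
  refine ⟨‖x - y‖ / x.im, ?_⟩
  rintro _ ⟨⟨q, hq⟩, rfl⟩
  rw [frontier_upperHalf] at hq
  have h1 : x.im ≤ ‖x - q‖ := im_le_norm_sub x q hq
  have h2 : x.im ≤ max ‖x - q‖ ‖y - q‖ := le_trans h1 (le_max_left _ _)
  exact div_le_div_of_nonneg_left (norm_nonneg _) hx h2

lemma ctilde_comm (x y : ℂ) : ctilde upperHalf x y = ctilde upperHalf y x := by
  unfold ctilde
  congr 1; funext p
  rw [norm_sub_rev, max_comm]

/-- Key: if `ĉ < r` and `im x ≤ im y`, then `‖x-y‖²(1-r) < r² im x · im y`. -/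
lemma key2 (x y : ℂ) (hx : 0 < x.im) (hxy : x.im ≤ y.im) (r : ℝ) (hr0 : 0 < r)
    (hr1 : r < 1) (h : ctilde upperHalf x y < r) :
    ‖x - y‖ ^ 2 * (1 - r) < r ^ 2 * (x.im * y.im) := by
  set a := x.im with ha
  set b := y.im with hb
  have hb0 : 0 < b := lt_of_lt_of_le hx hxy
  set t := ‖x - y‖ with htdef
  have ht0 : 0 ≤ t := norm_nonneg _
  -- the boundary point
  have hpmem : ((x.re : ℂ)) ∈ frontier upperHalf := by
    rw [frontier_upperHalf]; simp
  set p : frontier upperHalf := ⟨(x.re : ℂ), hpmem⟩ with hp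
  set M : ℝ := ‖y - (x.re : ℂ)‖ with hM
  have hbM : b ≤ M := im_le_norm_sub y _ (by simp)
  have hM0 : 0 < M := lt_of_lt_of_le hb0 hbM
  have hxp : ‖x - (x.re : ℂ)‖ = a := by
    have : x - (x.re : ℂ) = (a : ℂ) * Complex.I := by
      apply Complex.ext <;> simp [ha]
    rw [this, norm_mul, Complex.norm_real, Complex.norm_I,
      Real.norm_eq_abs, abs_of_pos hx, mul_one]
  have hmax : max ‖x - ((p : ℂ))‖ ‖y - ((p : ℂ))‖ = M := by
    have : ‖x - ((p : ℂ))‖ = a := hxp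
    rw [hp]
    simp only []
    rw [hxp]
    exact max_eq_right (le_trans hxy hbM)
  -- t / M ≤ ĉ < r
  have hle : t / M ≤ ctilde upperHalf x y := by
    have := le_ciSup (ctilde_bdd x y hx) p
    rwa [hmax] at this
  have htr : t < r * M := by
    have h3 : t / M < r := lt_of_le_of_lt hle h
    rw [div_lt_iff₀ hM0] at h3
    linarith
  -- key quadratic inequality : M² ≤ ab + Mt
  have hM2 : M ^ 2 = (y.re - x.re) ^ 2 + b ^ 2 := by
    rw [hM, Complex.sq_norm, Complex.normSq_apply]
    simp [hb]; ring
  have ht2 : t ^ 2 = (y.re - x.re) ^ 2 + (a - b) ^ 2 := by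
    rw [htdef, Complex.sq_norm, Complex.normSq_apply]
    simp [ha, hb]; ring
  have hkey : M ^ 2 ≤ a * b + M * t := by
    have h4 : (M ^ 2 - a * b) ^ 2 ≤ (M ^ 2) * (t ^ 2) := by
      rw [hM2, ht2]; nlinarith [sq_nonneg ((y.re - x.re) * a)]
    nlinarith [mul_nonneg hM0.le ht0, h4]
  -- conclude
  have h5 : (0:ℝ) < (r * M - t) * (r * M + t * (1 - r)) :=
    mul_pos (sub_pos.2 htr) (by nlinarith)
  nlinarith [h5, mul_le_mul_of_nonneg_left hkey (sq_nonneg r)]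

lemma key1 (x y : ℂ) (hx : 0 < x.im) (hy : 0 < y.im) (r : ℝ) (hr0 : 0 < r)
    (h : ‖x - y‖ < r * max x.im y.im) : ctilde upperHalf x y < r := by
  have hm0 : 0 < max x.im y.im := lt_max_of_lt_left hx
  have hsup : ctilde upperHalf x y ≤ ‖x - y‖ / max x.im y.im := by
    apply Real.iSup_le _ (by positivity)
    rintro ⟨q, hq⟩
    rw [frontier_upperHalf] at hq
    exact div_le_div_of_nonneg_left (norm_nonneg _) hm0
      (max_le_max (im_le_norm_sub x q hq) (im_le_norm_sub y q hq))
  refine lt_of_le_of_lt hsup ?_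
  rwa [div_lt_iff₀ hm0]

/-- Theorem: if `ρ` is the hyperbolic metric of the upper half-plane `H`, characterized by
`ρ ≥ 0` and `cosh(ρ(x,y)/2) = 1 + |x−y|²/(2·Im x·Im y)`, then for `x ∈ H` and `0 < r < 1`,
`B_ρ(x, log(1+r)) ⊆ B_{ĉ}(x, r) ⊆ B_ρ(x, 2·log(1 + r/(1−r)))`. -/
theorem hyperbolic_ctilde_ball_inclusions (ρ : ℂ → ℂ → ℝ)
    (hρ0 : ∀ x ∈ upperHalf, ∀ y ∈ upperHalf, 0 ≤ ρ x y)
    (hρ : ∀ x ∈ upperHalf, ∀ y ∈ upperHalf,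
      Real.cosh (ρ x y / 2) = 1 + ‖x - y‖ ^ 2 / (2 * x.im * y.im))
    (x : ℂ) (hx : x ∈ upperHalf) (r : ℝ) (hr0 : 0 < r) (hr1 : r < 1) :
    {y | y ∈ upperHalf ∧ ρ x y < Real.log (1 + r)} ⊆
      {y | y ∈ upperHalf ∧ ctilde upperHalf x y < r} ∧
    {y | y ∈ upperHalf ∧ ctilde upperHalf x y < r} ⊆
      {y | y ∈ upperHalf ∧ ρ x y < 2 * Real.log (1 + r / (1 - r))} := by
  have hx' : 0 < x.im := hx
  constructor
  · rintro y ⟨hy, hlt⟩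
    have hy' : 0 < y.im := hy
    refine ⟨hy, ?_⟩
    have hab : (0:ℝ) < 2 * x.im * y.im := by positivity
    -- monotonicity of cosh
    have hc : Real.cosh (ρ x y / 2) < Real.cosh (Real.log (1 + r) / 2) := by
      rw [Real.cosh_lt_cosh, abs_of_nonneg (by linarith [hρ0 x hx y hy]),
        abs_of_nonneg (by linarith [Real.log_nonneg (by linarith : (1:ℝ) ≤ 1 + r)] : (0:ℝ) ≤ Real.log (1 + r) / 2)]
      linarith
    rw [hρ x hx y hy] at hc
    -- compute cosh(log(1+r)/2)
    set s := Real.sqrt (1 + r) with hsdef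
    have hs2 : s ^ 2 = 1 + r := Real.sq_sqrt (by linarith)
    have hs1 : 1 ≤ s := by nlinarith [Real.sqrt_nonneg (1 + r)]
    have hs0 : 0 < s := lt_of_lt_of_le one_pos hs1
    have hsle : s ≤ 1 + r := by nlinarith
    have hcosh2 : Real.cosh (Real.log (1 + r) / 2) = (2 + r) / (2 * s) := by
      rw [← Real.log_sqrt (by linarith : (0:ℝ) ≤ 1 + r), ← hsdef, Real.cosh_eq,
        Real.exp_log hs0, Real.exp_neg, Real.exp_log hs0]
      field_simp
      nlinarith [hs2]
    rw [hcosh2, lt_div_iff₀ (by positivity : (0:ℝ) < 2 * s)] at hc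
    set X := ‖x - y‖ ^ 2 / (2 * x.im * y.im) with hXdef
    have hX0 : 0 ≤ X := by positivity
    have h7 : X < r ^ 2 / 2 := by
      nlinarith [mul_nonneg (sub_nonneg.2 hs1) hX0,
        mul_nonneg (by linarith : (0:ℝ) ≤ 1 + r - s) (by linarith : (0:ℝ) ≤ r + s - 1)]
    have h6 : ‖x - y‖ ^ 2 < r ^ 2 * (x.im * y.im) := by
      rw [hXdef, div_lt_iff₀ hab] at h7
      nlinarith [h7]
    apply key1 x y hx' hy' r hr0
    have hmax2 : x.im * y.im ≤ (max x.im y.im) ^ 2 := by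
      rcases le_total x.im y.im with h | h
      · rw [max_eq_right h]; nlinarith
      · rw [max_eq_left h]; nlinarith
    have h8 : ‖x - y‖ ^ 2 < (r * max x.im y.im) ^ 2 := by
      nlinarith [h6]
    exact lt_of_pow_lt_pow_left₀ 2 (by positivity) h8
  · rintro y ⟨hy, hc⟩
    have hy' : 0 < y.im := hy
    refine ⟨hy, ?_⟩
    have hab : (0:ℝ) < x.im * y.im := by positivity
    have h1r : (0:ℝ) < 1 - r := by linarith
    -- key estimate
    have hk : ‖x - y‖ ^ 2 * (1 - r) < r ^ 2 * (x.im * y.im) := by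
      rcases le_total x.im y.im with h | h
      · exact key2 x y hx' h r hr0 hr1 hc
      · have := key2 y x hy' h r hr0 hr1 (by rw [← ctilde_comm]; exact hc)
        rw [norm_sub_rev] at this
        linarith [this]
    set w : ℝ := 1 + r / (1 - r) with hwdef
    have hw' : w = (1 - r)⁻¹ := by rw [hwdef]; field_simp; ring
    have hw1 : 1 ≤ w := by rw [hw']; rw [le_inv_comm₀] <;> linarith
    have hw0 : 0 < w := lt_of_lt_of_le one_pos hw1
    have hcoshw : Real.cosh (2 * Real.log w / 2) = (w + (1 - r)) / 2 := by
      rw [show 2 * Real.log w / 2 = Real.log w by ring, Real.cosh_eq,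
        Real.exp_log hw0, Real.exp_neg, Real.exp_log hw0, hw', inv_inv]
    have hcomp : Real.cosh (ρ x y / 2) < Real.cosh (2 * Real.log w / 2) := by
      rw [hρ x hx y hy, hcoshw, hw']
      rw [show (1:ℝ) + ‖x - y‖ ^ 2 / (2 * x.im * y.im)
          = (2 * x.im * y.im + ‖x - y‖ ^ 2) / (2 * x.im * y.im) by
        field_simp]
      rw [div_lt_div_iff₀ (by positivity) (by norm_num : (0:ℝ) < 2)]
      have hinv : (1 - r)⁻¹ * (1 - r) = 1 := inv_mul_cancel₀ h1r.ne'
      nlinarith [hk, mul_pos hx' hy', hinv,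
        mul_le_mul_of_nonneg_left hk.le (by positivity : (0:ℝ) ≤ (1-r)⁻¹)]
    have := Real.cosh_lt_cosh.1 hcomp
    rw [abs_of_nonneg (by linarith [hρ0 x hx y hy]),
      abs_of_nonneg (by linarith [Real.log_nonneg hw1] : (0:ℝ) ≤ 2 * Real.log w / 2)] at this
    linarith
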